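/- As L → ∞, L^{−d} Σ_{k ∈ ℤ^d ∖ {0}} g_k^{(L)}/(1 − g_k^{(L)}) converges to ρ_c, and ρ_c < ∞. -/

import Mathlib

open MeasureTheory Filter Topology

noncomputable section

/-- the eigenvalue `g_k^{(L)} = exp(-β|2πk/L|²)` of the periodic heat operator. -/
def gk (d : ℕ) (β L : ℝ) (k : Fin d → ℤ) : ℝ :=
  Real.exp (-β * ∑ i, (2 * Real.pi * (k i : ℝ) / L) ^ 2)

/-- `a₁(p;1) = e^{-β|p|²}/(1 - e^{-β|p|²})`, whose integral over `ℝ^d` divided by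
`(2π)^d` is the critical density `ρ_c`. -/
def a1crit (d : ℕ) (β : ℝ) (p : EuclideanSpace ℝ (Fin d)) : ℝ :=
  Real.exp (-β * ‖p‖ ^ 2) / (1 - Real.exp (-β * ‖p‖ ^ 2))

/-! ### Auxiliary lemmas about `t ↦ (eᵗ - 1)⁻¹` -/

lemma hfun_eq (s : ℝ) : Real.exp (-s) / (1 - Real.exp (-s)) = (Real.exp s - 1)⁻¹ := by
  rcases eq_or_ne s 0 with rfl | hs
  · simp
  · have h1 : Real.exp s - 1 ≠ 0 := sub_ne_zero.mpr
      (fun h => hs (by simpa using Real.exp_eq_exp.mp (by rw [h, Real.exp_zero])))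
    have h0 : Real.exp s ≠ 0 := (Real.exp_pos s).ne'
    have h2 : 1 - Real.exp (-s) ≠ 0 := by
      rw [Real.exp_neg, sub_ne_zero]
      intro h
      field_simp at h
      exact hs (by simpa using h)
    rw [Real.exp_neg] at h2 ⊢
    field_simp

lemma hfun_nonneg {t : ℝ} (ht : 0 ≤ t) : 0 ≤ (Real.exp t - 1)⁻¹ := by
  have : (1:ℝ) ≤ Real.exp t := Real.one_le_exp ht
  have : 0 ≤ Real.exp t - 1 := by linarith
  positivity

lemma hfun_antitone {s t : ℝ} (hs : 0 < s) (hst : s ≤ t) :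
    (Real.exp t - 1)⁻¹ ≤ (Real.exp s - 1)⁻¹ := by
  have h1 : 0 < Real.exp s - 1 := by nlinarith [Real.add_one_le_exp s]
  have h2 : Real.exp s - 1 ≤ Real.exp t - 1 := by
    have := Real.exp_le_exp.mpr hst; linarith
  exact inv_anti₀ h1 h2

lemma hfun_le_inv {t : ℝ} (ht : 0 < t) : (Real.exp t - 1)⁻¹ ≤ t⁻¹ := by
  have h2 : t ≤ Real.exp t - 1 := by nlinarith [Real.add_one_le_exp t]
  exact inv_anti₀ ht h2

lemma hfun_le_key {t : ℝ} (ht : 0 < t) :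
    (Real.exp t - 1)⁻¹ ≤ 2 / t * Real.exp (-(t/2)) := by
  set e := Real.exp (t/2) with he
  have he1 : 1 + t/2 ≤ e := by nlinarith [Real.add_one_le_exp (t/2)]
  have hepos : 0 < e := Real.exp_pos _
  have hexp : Real.exp t = e * e := by
    rw [he, ← Real.exp_add]; ring_nf
  have hmain : t/2 * e ≤ (e - 1) * (e + 1) := by
    apply mul_le_mul (by linarith) (by linarith) (by positivity) (by linarith)
  have h4 : t/2 * e ≤ Real.exp t - 1 := by nlinarith
  have h5 : 0 < t/2 * e := by positivity
  calc (Real.exp t - 1)⁻¹ ≤ (t/2 * e)⁻¹ := inv_anti₀ h5 h4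
    _ = 2 / t * Real.exp (-(t/2)) := by
        rw [Real.exp_neg, ← he, mul_inv]
        field_simp

/-! ### Integrability of `x ↦ (e^{b|x|²} - 1)⁻¹` on `ℝᵈ`, `d > 2` -/

lemma integrable_abs_rpow_mul_exp_neg_mul_sq {b : ℝ} (hb : 0 < b) {s : ℝ} (hs : -1 < s) :
    Integrable fun t : ℝ => |t| ^ s * Real.exp (-b * t ^ 2) := by
  have hIoi : IntegrableOn (fun t : ℝ => |t| ^ s * Real.exp (-b * t ^ 2)) (Set.Ioi 0) := by
    refine (integrableOn_rpow_mul_exp_neg_mul_sq hb hs).congr_fun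
      (fun x hx => ?_) measurableSet_Ioi
    rw [abs_of_pos hx]
  rw [← integrableOn_univ, ← Set.Iio_union_Ici (a := (0:ℝ)), integrableOn_union,
    integrableOn_Ici_iff_integrableOn_Ioi]
  refine ⟨?_, hIoi⟩
  rw [← (Measure.measurePreserving_neg (volume : Measure ℝ)).integrableOn_comp_preimage
      (Homeomorph.neg ℝ).measurableEmbedding]
  simpa [Function.comp_def] using hIoi

lemma integrable_inv_exp_sq_sub_one {d : ℕ} (hd : 2 < d) {b : ℝ} (hb : 0 < b) :
    Integrable (fun x : Fin d → ℝ => (Real.exp (b * ∑ i, x i ^ 2) - 1)⁻¹) := by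
  have hd0 : (0:ℝ) < d := Nat.cast_pos.mpr (by omega)
  set u : ℝ → ℝ := fun t => |t| ^ (-(2/(d:ℝ))) * Real.exp (-(b/2) * t ^ 2) with hu
  have habs : ∀ t : ℝ, ((t:ℝ)^2) ^ (-(1/(d:ℝ))) = |t| ^ (-(2/(d:ℝ))) := fun t => by
    rw [← sq_abs t, ← Real.rpow_natCast |t| 2, ← Real.rpow_mul (abs_nonneg t)]
    congr 1
    push_cast
    ring
  have huint : Integrable u := by
    rw [hu]
    refine integrable_abs_rpow_mul_exp_neg_mul_sq (by positivity) ?_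
    have h1 : (2:ℝ)/d < 1 := (div_lt_one hd0).mpr (by exact_mod_cast hd)
    linarith
  have hprod : Integrable (fun x : Fin d → ℝ => ∏ i, u (x i)) :=
    Integrable.fintype_prod (fun _ => huint)
  have hae : ∀ᵐ x : Fin d → ℝ, ∀ i, x i ≠ 0 := by
    rw [volume_pi]
    exact ae_all_iff.mpr fun i => Measure.ae_eval_ne _ i 0
  refine (hprod.const_mul (2 / b * (d:ℝ)⁻¹)).mono' ?_ ?_
  · apply Measurable.aestronglyMeasurable
    fun_prop
  · filter_upwards [hae] with x hx
    set q := ∑ i, x i ^ 2 with hq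
    set Q := ∏ i, ((x i) ^ 2) ^ ((1:ℝ)/(d:ℝ)) with hQ
    have hQpos : 0 < Q := Finset.prod_pos fun i _ =>
      Real.rpow_pos_of_pos (by have := hx i; positivity) _
    have hAM : Q ≤ (1/(d:ℝ)) * q := by
      have h := Real.geom_mean_le_arith_mean_weighted Finset.univ
        (fun _ => 1/(d:ℝ)) (fun i => x i ^ 2)
        (fun i _ => by positivity)
        (by rw [Finset.sum_const, Finset.card_univ, Fintype.card_fin, nsmul_eq_mul]; field_simp)
        (fun i _ => sq_nonneg _)
      rw [← Finset.mul_sum] at h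
      exact h
    have hqd : (d:ℝ) * Q ≤ q := by
      rw [mul_comm, ← le_div_iff₀ hd0]
      have h1 : (1/(d:ℝ)) * q = q / d := by ring
      linarith [hAM]
    have hqpos : 0 < q := lt_of_lt_of_le (by positivity) hqd
    have hnorm : ‖(Real.exp (b * q) - 1)⁻¹‖ = (Real.exp (b * q) - 1)⁻¹ :=
      Real.norm_of_nonneg (hfun_nonneg (by positivity))
    rw [hnorm]
    have hkey := hfun_le_key (t := b * q) (by positivity)
    have hstep : 2 / (b * q) ≤ 2 / b * (d:ℝ)⁻¹ * Q⁻¹ := by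
      have h2 : 2 / (b*q) ≤ 2 / (b*((d:ℝ)*Q)) := by
        gcongr
      have heq : 2 / (b*((d:ℝ)*Q)) = 2/b*(d:ℝ)⁻¹*Q⁻¹ := by
        field_simp
      linarith
    have hprodeq : Q⁻¹ * Real.exp (-(b * q / 2)) = ∏ i, u (x i) := by
      rw [hu]
      rw [Finset.prod_mul_distrib]
      congr 1
      · rw [hQ, ← Finset.prod_inv_distrib]
        refine Finset.prod_congr rfl fun i _ => ?_
        rw [← habs (x i), Real.rpow_neg (sq_nonneg _)]
      · rw [← Real.exp_sum, ← Finset.mul_sum, ← hq]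
        congr 1
        ring
    calc (Real.exp (b * q) - 1)⁻¹ ≤ 2 / (b * q) * Real.exp (-(b * q / 2)) := by
          have h6 : -(b*q/2) = -(b*q)/2 := by ring
          rw [h6]
          convert hkey using 3
          ring
      _ ≤ 2 / b * (d:ℝ)⁻¹ * Q⁻¹ * Real.exp (-(b * q / 2)) :=
          mul_le_mul_of_nonneg_right hstep (Real.exp_nonneg _)
      _ = 2 / b * (d:ℝ)⁻¹ * (∏ i, u (x i)) := by rw [mul_assoc, hprodeq]

/-! ### The discretization -/

/-- the floor lattice point of `x` at scale `2π/L`. -/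
def Kfl (d : ℕ) (L : ℝ) (x : Fin d → ℝ) (i : Fin d) : ℤ := ⌊x i / (2 * Real.pi / L)⌋

/-- lattice points far from the origin. -/
def Cnd (d : ℕ) (k : Fin d → ℤ) : Prop := 4 * (d:ℤ)^2 < ∑ i, (k i)^2

instance Cnd.dec (d : ℕ) : DecidablePred (Cnd d) := fun k =>
  inferInstanceAs (Decidable (4 * (d:ℤ)^2 < ∑ i, (k i)^2))

/-- `F(x) = (e^{β|x|²}-1)⁻¹` on the pi type. -/
def Ffun (d : ℕ) (β : ℝ) (x : Fin d → ℝ) : ℝ := (Real.exp (β * ∑ i, x i ^ 2) - 1)⁻¹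

/-- the step function equal to `F(2πk/L)` on the cube of the lattice point `k`,
for `k` far from the origin. -/
def Phi (d : ℕ) (β L : ℝ) (x : Fin d → ℝ) : ℝ :=
  if Cnd d (Kfl d L x) then Ffun d β (fun i => (2 * Real.pi / L) * Kfl d L x i) else 0

/-- main part of the lattice sum. -/
def csum (d : ℕ) (β L : ℝ) (k : Fin d → ℤ) : ℝ :=
  if Cnd d k then Ffun d β (fun i => (2 * Real.pi / L) * k i) else 0

/-- the finitely many small lattice terms. -/
def bsum (d : ℕ) (β L : ℝ) (k : Fin d → ℤ) : ℝ :=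
  if k = 0 ∨ Cnd d k then 0 else Ffun d β (fun i => (2 * Real.pi / L) * k i)

lemma Ffun_nonneg {d : ℕ} {β : ℝ} (hβ : 0 ≤ β) (x : Fin d → ℝ) : 0 ≤ Ffun d β x := by
  rw [Ffun]
  exact hfun_nonneg (by positivity)

lemma a1crit_eq (d : ℕ) (β : ℝ) (p : EuclideanSpace ℝ (Fin d)) :
    a1crit d β p = (Real.exp (β * ∑ i, p i ^ 2) - 1)⁻¹ := by
  have hn : ‖p‖ ^ 2 = ∑ i, p i ^ 2 := by
    rw [EuclideanSpace.norm_eq, Real.sq_sqrt (by positivity)]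
    exact Finset.sum_congr rfl fun i _ => by rw [Real.norm_eq_abs, sq_abs]
  rw [a1crit, hn, neg_mul, hfun_eq]

/-- the basic geometric estimate: if `k` is far from the origin and `x` lies in the
cube of `k`, then `|2πk/L|² ≥ |x|²/4`. -/
lemma est_lemma {d : ℕ} {β ε : ℝ} (hβ : 0 < β) (hε : 0 < ε) (hd : 0 < d) {k : Fin d → ℤ}
    (hk : 4 * (d:ℝ)^2 < ∑ i, ((k i : ℝ))^2) {x : Fin d → ℝ}
    (hx : ∀ i, ε * k i ≤ x i ∧ x i < ε * k i + ε) :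
    (Real.exp (β * ∑ i, (ε * (k i:ℝ))^2) - 1)⁻¹ ≤ (Real.exp (β/4 * ∑ i, x i ^ 2) - 1)⁻¹ := by
  set A := ∑ i, (ε * (k i:ℝ))^2 with hA
  set X := ∑ i, x i ^ 2 with hX
  have hXA : X ≤ 2*A + 2*(d:ℝ)*ε^2 := by
    have hpt : ∀ i, x i ^2 ≤ 2*(ε*(k i:ℝ))^2 + 2*ε^2 := fun i => by
      obtain ⟨h1, h2⟩ := hx i
      have htc : (x i - ε*(k i:ℝ))^2 ≤ ε^2 := by
        nlinarith [mul_nonneg (by linarith : (0:ℝ) ≤ ε - (x i - ε*(k i:ℝ)))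
          (by linarith : (0:ℝ) ≤ ε + (x i - ε*(k i:ℝ)))]
      nlinarith [htc, sq_nonneg (2*ε*(k i:ℝ) - x i)]
    calc X ≤ ∑ i, (2*(ε*(k i:ℝ))^2 + 2*ε^2) := Finset.sum_le_sum (fun i _ => hpt i)
      _ = 2*A + 2*(d:ℝ)*ε^2 := by
          rw [Finset.sum_add_distrib, ← Finset.mul_sum, Finset.sum_const, Finset.card_univ,
            Fintype.card_fin, nsmul_eq_mul]
          ring
  have hAX : A ≤ 2*X + 2*(d:ℝ)*ε^2 := by
    have hpt : ∀ i, (ε*(k i:ℝ))^2 ≤ 2*(x i)^2 + 2*ε^2 := fun i => by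
      obtain ⟨h1, h2⟩ := hx i
      have htc : (x i - ε*(k i:ℝ))^2 ≤ ε^2 := by
        nlinarith [mul_nonneg (by linarith : (0:ℝ) ≤ ε - (x i - ε*(k i:ℝ)))
          (by linarith : (0:ℝ) ≤ ε + (x i - ε*(k i:ℝ)))]
      nlinarith [htc, sq_nonneg (x i + (x i - ε*(k i:ℝ)))]
    calc A ≤ ∑ i, (2*(x i)^2 + 2*ε^2) := Finset.sum_le_sum (fun i _ => hpt i)
      _ = 2*X + 2*(d:ℝ)*ε^2 := by
          rw [Finset.sum_add_distrib, ← Finset.mul_sum, Finset.sum_const, Finset.card_univ,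
            Fintype.card_fin, nsmul_eq_mul]
          ring
  have hA4 : 4*(d:ℝ)^2*ε^2 < A := by
    have hAeq : A = ε^2 * ∑ i, ((k i:ℝ))^2 := by
      rw [hA, Finset.mul_sum]
      exact Finset.sum_congr rfl fun i _ => by ring
    rw [hAeq]
    have hε2 : 0 < ε^2 := by positivity
    nlinarith
  have hd1 : (1:ℝ) ≤ d := by exact_mod_cast hd
  have hdd : (d:ℝ) ≤ (d:ℝ)^2 := by nlinarith
  have hε2 : 0 < ε^2 := by positivity
  have hdeps : 2*(d:ℝ)*ε^2 ≤ A/2 := by nlinarith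
  have hApos : 0 < A := by nlinarith
  have hXpos : 0 < X := by nlinarith
  have hX4A : X ≤ 4*A := by nlinarith
  apply hfun_antitone (by positivity)
  nlinarith

lemma phi_measurable {d : ℕ} (β L : ℝ) : Measurable (Phi d β L) := by
  have h1 : Phi d β L = (fun k : Fin d → ℤ =>
      if Cnd d k then Ffun d β (fun i => (2 * Real.pi / L) * k i) else 0) ∘ (Kfl d L) := rfl
  rw [h1]
  refine (measurable_of_countable _).comp ?_
  exact measurable_pi_lambda _ (fun i =>
    Int.measurable_floor.comp ((measurable_pi_apply i).div_const _))

lemma phi_norm_le {d : ℕ} (hd : 0 < d) {β L : ℝ} (hβ : 0 < β) (hL : 0 < L) (x : Fin d → ℝ) :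
    ‖Phi d β L x‖ ≤ Ffun d (β/4) x := by
  have hε : (0:ℝ) < 2 * Real.pi / L := by positivity
  rw [Phi]
  split
  · rename_i hc
    rw [Real.norm_of_nonneg (Ffun_nonneg hβ.le _)]
    rw [Ffun, Ffun]
    apply est_lemma hβ hε hd
    · rw [Cnd] at hc
      exact_mod_cast hc
    · intro i
      constructor
      · have h1 : ((Kfl d L x i : ℝ)) ≤ x i / (2 * Real.pi / L) := Int.floor_le _
        rw [le_div_iff₀ hε] at h1
        linarith
      · have h2 : x i / (2 * Real.pi / L) < (Kfl d L x i : ℝ) + 1 := Int.lt_floor_add_one _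
        rw [div_lt_iff₀ hε] at h2
        nlinarith
  · rw [norm_zero]
    exact Ffun_nonneg (by positivity) x

lemma phi_tendsto {d : ℕ} (hd : 0 < d) {β : ℝ} (hβ : 0 < β) {x : Fin d → ℝ}
    (hx : ∀ i, x i ≠ 0) :
    Tendsto (fun L => Phi d β L x) atTop (𝓝 (Ffun d β x)) := by
  have : Nonempty (Fin d) := Fin.pos_iff_nonempty.mp hd
  have hεlim : Tendsto (fun L : ℝ => 2 * Real.pi / L) atTop (𝓝 0) :=
    tendsto_const_nhds.div_atTop tendsto_id
  have hcoord : ∀ i, Tendsto (fun L : ℝ => (2 * Real.pi / L) * (Kfl d L x i : ℝ))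
      atTop (𝓝 (x i)) := by
    intro i
    have hlow : ∀ᶠ L : ℝ in atTop,
        x i - (2 * Real.pi / L) ≤ (2 * Real.pi / L) * (Kfl d L x i : ℝ) := by
      filter_upwards [eventually_gt_atTop 0] with L hL
      have hε : (0:ℝ) < 2 * Real.pi / L := by positivity
      have h2 : x i / (2 * Real.pi / L) < (Kfl d L x i : ℝ) + 1 := Int.lt_floor_add_one _
      rw [div_lt_iff₀ hε] at h2
      nlinarith
    have hup : ∀ᶠ L : ℝ in atTop, (2 * Real.pi / L) * (Kfl d L x i : ℝ) ≤ x i := by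
      filter_upwards [eventually_gt_atTop 0] with L hL
      have hε : (0:ℝ) < 2 * Real.pi / L := by positivity
      have h1 : ((Kfl d L x i : ℝ)) ≤ x i / (2 * Real.pi / L) := Int.floor_le _
      rw [le_div_iff₀ hε] at h1
      linarith
    refine tendsto_of_tendsto_of_tendsto_of_le_of_le' ?_ tendsto_const_nhds hlow hup
    simpa using tendsto_const_nhds.sub hεlim
  have hsumlim : Tendsto (fun L : ℝ => ∑ i, ((2 * Real.pi / L) * (Kfl d L x i : ℝ))^2)
      atTop (𝓝 (∑ i, x i ^ 2)) :=
    tendsto_finset_sum _ (fun i _ => (hcoord i).pow 2)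
  have hqpos : 0 < ∑ i, x i ^ 2 :=
    Finset.sum_pos (fun i _ => by have := hx i; positivity) Finset.univ_nonempty
  have hcond : ∀ᶠ L : ℝ in atTop, Cnd d (Kfl d L x) := by
    have h4 : Tendsto (fun L : ℝ => 4 * (d:ℝ)^2 * (2 * Real.pi / L)^2) atTop (𝓝 0) := by
      have := (hεlim.pow 2).const_mul (4 * (d:ℝ)^2)
      simpa using this
    have hlt := h4.eventually_lt hsumlim (by simpa using hqpos)
    filter_upwards [hlt, eventually_gt_atTop 0] with L hL1 hL2
    rw [Cnd]
    have hε : (0:ℝ) < 2 * Real.pi / L := by positivity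
    have hsum : ∑ i, ((2 * Real.pi / L) * (Kfl d L x i : ℝ))^2
        = (2 * Real.pi / L)^2 * ∑ i, ((Kfl d L x i : ℝ))^2 := by
      rw [Finset.mul_sum]
      exact Finset.sum_congr rfl fun i _ => by ring
    rw [hsum] at hL1
    have hε2 : 0 < (2 * Real.pi / L)^2 := by positivity
    have hfin : 4 * (d:ℝ)^2 < ∑ i, ((Kfl d L x i : ℝ))^2 := by nlinarith
    exact_mod_cast hfin
  have hne : Real.exp (β * ∑ i, x i ^ 2) - 1 ≠ 0 := by
    have : 1 < Real.exp (β * ∑ i, x i ^ 2) := by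
      nlinarith [Real.add_one_le_exp (β * ∑ i, x i ^ 2), hqpos, hβ]
    linarith
  have hFlim : Tendsto (fun L : ℝ => Ffun d β (fun i => (2 * Real.pi / L) * Kfl d L x i))
      atTop (𝓝 (Ffun d β x)) := by
    simp only [Ffun]
    exact (((Real.continuous_exp.tendsto _).comp (hsumlim.const_mul β)).sub_const 1).inv₀
      hne
  refine hFlim.congr' ?_
  filter_upwards [hcond] with L hc
  rw [Phi, if_pos hc]

lemma hasSum_csum {d : ℕ} (hd : 2 < d) {β : ℝ} (hβ : 0 < β) {L : ℝ} (hL : 0 < L) :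
    HasSum (csum d β L)
      ((((2 * Real.pi / L))^d)⁻¹ * ∫ x : Fin d → ℝ, Phi d β L x) := by
  classical
  have hd0 : 0 < d := by omega
  set ε := 2 * Real.pi / L with hε
  have hε0 : 0 < ε := by positivity
  set cube : (Fin d → ℤ) → Set (Fin d → ℝ) :=
    fun k => Set.univ.pi (fun i => Set.Ico (ε * k i) (ε * k i + ε)) with hcube
  have hmem : ∀ (x : Fin d → ℝ) (k : Fin d → ℤ), x ∈ cube k ↔ Kfl d L x = k := by
    intro x k
    rw [hcube]
    simp only [Set.mem_pi, Set.mem_univ, forall_true_left, Set.mem_Ico, funext_iff]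
    refine forall_congr' fun i => ?_
    rw [Kfl, ← hε, Int.floor_eq_iff, le_div_iff₀ hε0, div_lt_iff₀ hε0]
    constructor
    · rintro ⟨h1, h2⟩
      exact ⟨by linarith, by nlinarith⟩
    · rintro ⟨h1, h2⟩
      exact ⟨by linarith, by nlinarith⟩
  have hcube_meas : ∀ k, MeasurableSet (cube k) :=
    fun k => MeasurableSet.univ_pi (fun i => measurableSet_Ico)
  have hdisj : Pairwise (Function.onFun Disjoint cube) := by
    intro k k' hne
    rw [Function.onFun, Set.disjoint_left]
    intro x hx hx'
    exact hne (((hmem x k).mp hx).symm.trans ((hmem x k').mp hx'))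
  have hunion : (⋃ k, cube k) = Set.univ :=
    Set.eq_univ_iff_forall.mpr fun x => Set.mem_iUnion.mpr ⟨Kfl d L x, (hmem x _).mpr rfl⟩
  have hΦint : Integrable (Phi d β L) := by
    refine (integrable_inv_exp_sq_sub_one hd (by positivity : 0 < β/4)).mono'
      (phi_measurable β L).aestronglyMeasurable ?_
    exact Eventually.of_forall (fun x => phi_norm_le hd0 hβ hL x)
  have hHS : HasSum (fun k => ∫ x in cube k, Phi d β L x) (∫ x, Phi d β L x) := by
    have h := hasSum_integral_iUnion hcube_meas hdisj hΦint.integrableOn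
    rwa [hunion, Measure.restrict_univ] at h
  have hval : ∀ k, ∫ x in cube k, Phi d β L x = ε^d * csum d β L k := by
    intro k
    have heq : Set.EqOn (Phi d β L) (fun _ => csum d β L k) (cube k) := fun x hxm => by
      have hkk : Kfl d L x = k := (hmem x k).mp hxm
      simp only [Phi, csum, hkk, ← hε]
    rw [setIntegral_congr_fun (hcube_meas k) heq, setIntegral_const]
    have hvol : volume (cube k) = ENNReal.ofReal ε ^ d := by
      rw [hcube, volume_pi_pi]
      simp only [Real.volume_Ico, add_sub_cancel_left]
      rw [Finset.prod_const, Finset.card_univ, Fintype.card_fin]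
    rw [measureReal_def, hvol, ENNReal.toReal_pow, ENNReal.toReal_ofReal hε0.le, smul_eq_mul]
  simp only [hval] at hHS
  have h2 := hHS.mul_left (ε^d)⁻¹
  have hεd : (ε:ℝ)^d ≠ 0 := by positivity
  simpa [inv_mul_cancel_left₀ hεd] using h2

lemma decomp {d : ℕ} {β L : ℝ} (k : Fin d → ℤ) :
    (if k = 0 then (0:ℝ) else gk d β L k / (1 - gk d β L k)) = csum d β L k + bsum d β L k := by
  classical
  have hgkeq : gk d β L k / (1 - gk d β L k)
      = Ffun d β (fun i => (2 * Real.pi / L) * k i) := by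
    rw [gk, Ffun]
    have harg : ∀ i ∈ Finset.univ, (2 * Real.pi * ((k i:ℤ):ℝ) / L)^2
        = ((2 * Real.pi / L) * (k i:ℝ))^2 := fun i _ => by ring
    rw [Finset.sum_congr rfl harg, neg_mul, hfun_eq]
  rcases eq_or_ne k 0 with rfl | hk
  · have hC0 : ¬ Cnd d 0 := by
      rw [Cnd]
      push_neg
      have hz : ∑ i, ((0 : Fin d → ℤ) i)^2 = 0 := by simp
      rw [hz]
      positivity
    simp [csum, bsum, hC0]
  · rw [if_neg hk, hgkeq]
    by_cases hc : Cnd d k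
    · simp [csum, bsum, hc, hk]
    · simp [csum, bsum, hc, hk]

lemma bsum_nonneg {d : ℕ} {β L : ℝ} (hβ : 0 < β) (k : Fin d → ℤ) : 0 ≤ bsum d β L k := by
  rw [bsum]
  split
  · exact le_refl 0
  · exact Ffun_nonneg hβ.le _

lemma bsum_support {d : ℕ} (hd : 0 < d) {β L : ℝ} {k : Fin d → ℤ}
    (hk : k ∉ Finset.Icc (fun _ : Fin d => -(2*(d:ℤ))) (fun _ => 2*(d:ℤ))) :
    bsum d β L k = 0 := by
  classical
  rcases Classical.em (k = 0 ∨ Cnd d k) with h | h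
  · rw [bsum, if_pos h]
  · exfalso
    apply hk
    push_neg at h
    obtain ⟨-, hc⟩ := h
    rw [Cnd, not_lt] at hc
    have hd1 : (1:ℤ) ≤ (d:ℤ) := by exact_mod_cast hd
    rw [Finset.mem_Icc]
    constructor <;> rw [Pi.le_def] <;> intro i <;>
      have hi : (k i)^2 ≤ 4 * (d:ℤ)^2 :=
        le_trans (Finset.single_le_sum (fun j _ => sq_nonneg (k j)) (Finset.mem_univ i)) hc
    · nlinarith [sq_nonneg (k i + 2*(d:ℤ))]
    · nlinarith [sq_nonneg (k i - 2*(d:ℤ))]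

lemma bsum_summable {d : ℕ} (hd : 0 < d) (β L : ℝ) : Summable (bsum d β L) := by
  apply summable_of_finite_support
  apply Set.Finite.subset (Finset.Icc (fun _ : Fin d => -(2*(d:ℤ))) (fun _ => 2*(d:ℤ))).finite_toSet
  intro k hk
  by_contra hkS
  exact hk (bsum_support hd (by simpa using hkS))

lemma tsum_bsum_le {d : ℕ} (hd : 0 < d) {β L : ℝ} (hβ : 0 < β) (hL : 0 < L) :
    ∑' k, bsum d β L k
      ≤ ((Finset.Icc (fun _ : Fin d => -(2*(d:ℤ))) (fun _ => 2*(d:ℤ))).card : ℝ)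
        * (β * (2 * Real.pi / L)^2)⁻¹ := by
  classical
  set S := Finset.Icc (fun _ : Fin d => -(2*(d:ℤ))) (fun _ => 2*(d:ℤ)) with hS
  have hε : (0:ℝ) < 2 * Real.pi / L := by positivity
  have h0 : ∀ k ∉ S, bsum d β L k = 0 := fun k hk => bsum_support hd hk
  rw [tsum_eq_sum h0]
  have hbd : ∀ k ∈ S, bsum d β L k ≤ (β * (2 * Real.pi / L)^2)⁻¹ := by
    intro k _
    rw [bsum]
    split
    · positivity
    · rename_i h
      push_neg at h
      obtain ⟨hk0, -⟩ := h
      have hone : (1:ℝ) ≤ ∑ i, ((k i:ℝ))^2 := by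
        obtain ⟨i, hi⟩ := Function.ne_iff.mp hk0
        have h1 : (1:ℤ) ≤ (k i)^2 := by
          have := Int.one_le_abs (by simpa using hi)
          nlinarith [sq_abs (k i)]
        have h1' : (1:ℝ) ≤ ((k i:ℝ))^2 := by exact_mod_cast h1
        exact le_trans h1' (Finset.single_le_sum (fun j _ => sq_nonneg ((k j:ℝ)))
          (Finset.mem_univ i))
      have hsum : ∑ i, ((2 * Real.pi / L) * (k i:ℝ))^2
          = (2 * Real.pi / L)^2 * ∑ i, ((k i:ℝ))^2 := by
        rw [Finset.mul_sum]
        exact Finset.sum_congr rfl fun i _ => by ring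
      rw [Ffun, hsum]
      have harg : 0 < β * ((2 * Real.pi / L)^2 * ∑ i, ((k i:ℝ))^2) :=
        mul_pos hβ (mul_pos (by positivity) (lt_of_lt_of_le zero_lt_one hone))
      calc (Real.exp (β * ((2 * Real.pi / L)^2 * ∑ i, ((k i:ℝ))^2)) - 1)⁻¹
          ≤ (β * ((2 * Real.pi / L)^2 * ∑ i, ((k i:ℝ))^2))⁻¹ := hfun_le_inv harg
        _ ≤ (β * (2 * Real.pi / L)^2)⁻¹ := by
            apply inv_anti₀ (by positivity)
            nlinarith
  calc ∑ k ∈ S, bsum d β L k ≤ S.card • (β * (2 * Real.pi / L)^2)⁻¹ :=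
        Finset.sum_le_card_nsmul S _ _ hbd
    _ = (S.card : ℝ) * (β * (2 * Real.pi / L)^2)⁻¹ := nsmul_eq_mul _ _

/-- Lemma 4(iii): `ρ_c < ∞` (i.e. `a₁(⬝;1)` is integrable since `d > 2`) and
`L^{-d} Σ_{k≠0} g_k^{(L)}/(1-g_k^{(L)}) → ρ_c` as `L → ∞`. -/
theorem critical_density_limit (d : ℕ) (hd : 2 < d) (β : ℝ) (hβ : 0 < β) :
    Integrable (fun p : EuclideanSpace ℝ (Fin d) => a1crit d β p) ∧
    Tendsto
      (fun L : ℝ =>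
        (∑' k : Fin d → ℤ, if k = 0 then 0 else gk d β L k / (1 - gk d β L k)) / L ^ d)
      atTop
      (nhds ((∫ p : EuclideanSpace ℝ (Fin d), a1crit d β p) / (2 * Real.pi) ^ d)) := by
  classical
  have hd0 : 0 < d := by omega
  have hβ4 : (0:ℝ) < β/4 := by positivity
  have hFint : Integrable (Ffun d β) := integrable_inv_exp_sq_sub_one hd hβ
  have hgint : Integrable (Ffun d (β/4)) := integrable_inv_exp_sq_sub_one hd hβ4
  have hcomp : (fun p : EuclideanSpace ℝ (Fin d) => a1crit d β p)
      = fun p => Ffun d β ((MeasurableEquiv.toLp 2 (Fin d → ℝ)).symm p) := by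
    funext p
    rw [a1crit_eq d β p, Ffun]
    rfl
  have hint1 : Integrable (fun p : EuclideanSpace ℝ (Fin d) => a1crit d β p) := by
    rw [hcomp]
    exact ((EuclideanSpace.volume_preserving_symm_measurableEquiv_toLp (Fin d)).integrable_comp_emb
      (MeasurableEquiv.toLp 2 (Fin d → ℝ)).symm.measurableEmbedding).mpr hFint
  have hinteq : (∫ p : EuclideanSpace ℝ (Fin d), a1crit d β p) = ∫ x : Fin d → ℝ, Ffun d β x := by
    rw [hcomp]
    exact (EuclideanSpace.volume_preserving_symm_measurableEquiv_toLp (Fin d)).integral_comp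
      (MeasurableEquiv.toLp 2 (Fin d → ℝ)).symm.measurableEmbedding (Ffun d β)
  refine ⟨hint1, ?_⟩
  rw [hinteq]
  -- dominated convergence for the step functions
  have hDCT : Tendsto (fun L : ℝ => ∫ x : Fin d → ℝ, Phi d β L x) atTop
      (𝓝 (∫ x : Fin d → ℝ, Ffun d β x)) := by
    refine tendsto_integral_filter_of_dominated_convergence (Ffun d (β/4))
      (Eventually.of_forall fun L => (phi_measurable β L).aestronglyMeasurable)
      ?_ hgint ?_
    · filter_upwards [eventually_gt_atTop 0] with L hL
      exact Eventually.of_forall (phi_norm_le hd0 hβ hL)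
    · have hae : ∀ᵐ x : Fin d → ℝ, ∀ i, x i ≠ 0 := by
        rw [volume_pi]
        exact ae_all_iff.mpr fun i => Measure.ae_eval_ne _ i 0
      filter_upwards [hae] with x hx
      exact phi_tendsto hd0 hβ hx
  -- the small terms vanish
  set S := Finset.Icc (fun _ : Fin d => -(2*(d:ℤ))) (fun _ => 2*(d:ℤ)) with hS
  have hzero : Tendsto (fun L : ℝ => (∑' k, bsum d β L k) / L^d) atTop (𝓝 0) := by
    have hU : Tendsto (fun L : ℝ =>
        ((S.card : ℝ) * (β * (2 * Real.pi / L)^2)⁻¹) / L^d) atTop (𝓝 0) := by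
      have heq : ∀ᶠ L : ℝ in atTop, ((S.card : ℝ) * (β * (2 * Real.pi / L)^2)⁻¹) / L^d
          = ((S.card : ℝ)/(β * (2 * Real.pi)^2)) * ((L^(d-2))⁻¹) := by
        filter_upwards [eventually_gt_atTop 0] with L hL
        have hLd : L^d = L^(d-2) * L^2 := by
          rw [← pow_add]
          congr 1
          omega
        have hπ : (0:ℝ) < Real.pi := Real.pi_pos
        rw [hLd]
        field_simp
      have hlim : Tendsto (fun L : ℝ => ((S.card : ℝ)/(β * (2 * Real.pi)^2)) * ((L^(d-2))⁻¹))
          atTop (𝓝 0) := by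
        have h1 : Tendsto (fun L : ℝ => L^(d-2)) atTop atTop :=
          tendsto_pow_atTop (by omega)
        have h2 := h1.inv_tendsto_atTop
        have := h2.const_mul ((S.card : ℝ)/(β * (2 * Real.pi)^2))
        simpa using this
      exact hlim.congr' (heq.mono fun L h => h.symm)
    apply squeeze_zero' ?_ ?_ hU
    · filter_upwards [eventually_gt_atTop 0] with L hL
      exact div_nonneg (tsum_nonneg fun k => bsum_nonneg hβ k) (by positivity)
    · filter_upwards [eventually_gt_atTop 0] with L hL
      have hb := tsum_bsum_le (d := d) hd0 (β := β) (L := L) hβ hL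
      exact (div_le_div_iff_of_pos_right (by positivity)).mpr hb
  -- eventual identity
  have hkey : ∀ᶠ L : ℝ in atTop,
      (∑' k : Fin d → ℤ, if k = 0 then (0:ℝ) else gk d β L k / (1 - gk d β L k)) / L ^ d
        = (∫ x : Fin d → ℝ, Phi d β L x) / (2 * Real.pi)^d + (∑' k, bsum d β L k) / L^d := by
    filter_upwards [eventually_gt_atTop 0] with L hL
    have hcs := hasSum_csum hd hβ hL
    rw [tsum_congr (fun k => decomp (d := d) (β := β) (L := L) k)]
    rw [Summable.tsum_add hcs.summable (bsum_summable hd0 β L), hcs.tsum_eq, add_div]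
    congr 1
    rw [div_eq_div_iff (by positivity) (by positivity)]
    have hεL : (2 * Real.pi / L) * L = 2 * Real.pi := div_mul_cancel₀ _ hL.ne'
    rw [← hεL, mul_pow]
    have hεd : ((2 * Real.pi / L):ℝ)^d ≠ 0 := by positivity
    field_simp
  have hfinal := (hDCT.div_const ((2 * Real.pi)^d)).add hzero
  rw [add_zero] at hfinal
  exact Filter.Tendsto.congr' (hkey.mono fun L h => h.symm) hfinal
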